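/- Let a, b, c be pairwise coprime integers with 1 < a < b < c, and let p be a non-negative integer. Let C_{p,1} be the graph whose vertex set is {a^{p−x−y} b^x c^y : x, y ∈ ℕ₀, x + y ≤ p} and in which distinct vertices u, v are adjacent if and only if bu = av, cu = av, bv = au, or cv = au. Then the independence number of C_{p,1} equals (i+1)² if p = 2i for some integer i ≥ 0, and equals i(i+1) if p = 2i − 1 for some integer i ≥ 1. -/

import Mathlib

/-- The vertex set of the component `C_{p,1}`. -/
def CompVerts (a b c p : ℕ) : Set ℕ :=
  {m : ℕ | ∃ x y : ℕ, x + y ≤ p ∧ m = a ^ (p - x - y) * b ^ x * c ^ y}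

/-- Adjacency in the component `C_{p,1}`: distinct `u, v` are adjacent iff
`bu = av`, `cu = av`, `bv = au`, or `cv = au`. -/
def CompAdj (a b c : ℕ) (u v : ℕ) : Prop :=
  u ≠ v ∧ (b * u = a * v ∨ c * u = a * v ∨ b * v = a * u ∨ c * v = a * u)

/-- `I` is an independent set: a set of vertices of `C_{p,1}` that are pairwise
non-adjacent. -/
def CompIndep (a b c p : ℕ) (I : Finset ℕ) : Prop :=
  ↑I ⊆ CompVerts a b c p ∧ ∀ u ∈ I, ∀ v ∈ I, ¬ CompAdj a b c u v


lemma fact3 {a b c : ℕ} (ha : a ≠ 0) (hb : b ≠ 0) (hc : c ≠ 0) (k x y q : ℕ) :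
    (a ^ k * b ^ x * c ^ y).factorization q
      = k * a.factorization q + x * b.factorization q + y * c.factorization q := by
  rw [Nat.factorization_mul (by positivity) (pow_ne_zero _ hc),
      Nat.factorization_mul (pow_ne_zero _ ha) (pow_ne_zero _ hb),
      Nat.factorization_pow, Nat.factorization_pow, Nat.factorization_pow]
  simp [mul_comm]

lemma not_dvd_of_cop {q a b : ℕ} (hq : q.Prime) (h : Nat.Coprime a b) (hd : q ∣ b) :
    ¬ q ∣ a := fun hda => hq.ne_one (Nat.dvd_one.mp (h ▸ Nat.dvd_gcd hda hd))

lemma coords_val {a b c : ℕ} (ha : 1 < a) (hb : 1 < b) (hc : 1 < c)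
    (hab : Nat.Coprime a b) (hac : Nat.Coprime a c) (hbc : Nat.Coprime b c)
    (k x y : ℕ) :
    (a ^ k * b ^ x * c ^ y).factorization b.minFac / b.factorization b.minFac = x ∧
    (a ^ k * b ^ x * c ^ y).factorization c.minFac / c.factorization c.minFac = y := by
  have ha0 : a ≠ 0 := by omega
  have hb0 : b ≠ 0 := by omega
  have hc0 : c ≠ 0 := by omega
  have hqb : b.minFac.Prime := Nat.minFac_prime (by omega)
  have hqc : c.minFac.Prime := Nat.minFac_prime (by omega)
  have hqba : ¬ b.minFac ∣ a := not_dvd_of_cop hqb hab (Nat.minFac_dvd b)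
  have hqbc : ¬ b.minFac ∣ c := not_dvd_of_cop hqb hbc.symm (Nat.minFac_dvd b)
  have hqca : ¬ c.minFac ∣ a := not_dvd_of_cop hqc hac (Nat.minFac_dvd c)
  have hqcb : ¬ c.minFac ∣ b := not_dvd_of_cop hqc hbc (Nat.minFac_dvd c)
  constructor
  · rw [fact3 ha0 hb0 hc0, Nat.factorization_eq_zero_of_not_dvd hqba,
      Nat.factorization_eq_zero_of_not_dvd hqbc]
    simp only [mul_zero, zero_add, add_zero]
    exact Nat.mul_div_cancel _ (hqb.factorization_pos_of_dvd hb0 (Nat.minFac_dvd b))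
  · rw [fact3 ha0 hb0 hc0, Nat.factorization_eq_zero_of_not_dvd hqca,
      Nat.factorization_eq_zero_of_not_dvd hqcb]
    simp only [mul_zero, zero_add, add_zero]
    exact Nat.mul_div_cancel _ (hqc.factorization_pos_of_dvd hc0 (Nat.minFac_dvd c))

lemma coords_eq {a b c : ℕ} (ha : 1 < a) (hb : 1 < b) (hc : 1 < c)
    (hab : Nat.Coprime a b) (hac : Nat.Coprime a c) (hbc : Nat.Coprime b c)
    {k1 x1 y1 k2 x2 y2 : ℕ}
    (h : a ^ k1 * b ^ x1 * c ^ y1 = a ^ k2 * b ^ x2 * c ^ y2) :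
    x1 = x2 ∧ y1 = y2 := by
  obtain ⟨e1b, e1c⟩ := coords_val ha hb hc hab hac hbc k1 x1 y1
  obtain ⟨e2b, e2c⟩ := coords_val ha hb hc hab hac hbc k2 x2 y2
  rw [h] at e1b e1c
  exact ⟨e1b.symm.trans e2b, e1c.symm.trans e2c⟩

lemma card_blocks (p : ℕ) :
    ((Finset.range (p+1) ×ˢ Finset.range (p+1)).filter
      (fun z : ℕ × ℕ => 2*z.1 + z.2 ≤ p)).card = (p/2+1) * ((p+1)/2+1) := by
  have hrect : (p/2+1) * ((p+1)/2+1)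
      = (Finset.range (p/2+1) ×ˢ Finset.range ((p+1)/2+1)).card := by
    simp
  rw [hrect]
  apply Finset.card_bij'
    (i := fun z _ => if z.2 ≤ (p+1)/2 then z else (p/2 - z.1, 2*((p+1)/2)+1 - z.2))
    (j := fun z _ => if 2*z.1 + z.2 ≤ p then z else (p/2 - z.1, 2*((p+1)/2)+1 - z.2))
  · rintro ⟨q, y⟩ hz
    simp only [Finset.mem_filter, Finset.mem_product, Finset.mem_range] at hz
    obtain ⟨⟨h1, h2⟩, h3⟩ := hz
    simp only [Finset.mem_product, Finset.mem_range]
    split_ifs with h <;> dsimp only <;> omega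
  · rintro ⟨s, t⟩ hz
    simp only [Finset.mem_product, Finset.mem_range] at hz
    obtain ⟨h1, h2⟩ := hz
    simp only [Finset.mem_filter, Finset.mem_product, Finset.mem_range]
    split_ifs with h <;> dsimp only <;> omega
  · rintro ⟨q, y⟩ hz
    simp only [Finset.mem_filter, Finset.mem_product, Finset.mem_range] at hz
    obtain ⟨⟨h1, h2⟩, h3⟩ := hz
    dsimp only
    split_ifs with h1' h2' h3' <;> rw [Prod.mk.injEq] <;> omega
  · rintro ⟨s, t⟩ hz
    simp only [Finset.mem_product, Finset.mem_range] at hz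
    obtain ⟨h1, h2⟩ := hz
    dsimp only
    split_ifs with h1' h2' h3' <;> rw [Prod.mk.injEq] <;> omega

lemma card_parity (p : ℕ) :
    ((Finset.range (p+1) ×ˢ Finset.range (p+1)).filter
      (fun z : ℕ × ℕ => z.1 + z.2 ≤ p ∧ (z.1 + z.2) % 2 = p % 2)).card
        = (p/2+1) * ((p+1)/2+1) := by
  rw [← card_blocks p]
  apply Finset.card_bij'
    (i := fun z _ => ((p - z.1 - z.2)/2, z.2))
    (j := fun z _ => (p - z.2 - 2*z.1, z.2))
  · rintro ⟨x, y⟩ hz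
    simp only [Finset.mem_filter, Finset.mem_product, Finset.mem_range] at hz
    obtain ⟨⟨h1, h2⟩, h3, h4⟩ := hz
    simp only [Finset.mem_filter, Finset.mem_product, Finset.mem_range]
    omega
  · rintro ⟨q, y⟩ hz
    simp only [Finset.mem_filter, Finset.mem_product, Finset.mem_range] at hz
    obtain ⟨⟨h1, h2⟩, h3⟩ := hz
    simp only [Finset.mem_filter, Finset.mem_product, Finset.mem_range]
    omega
  · rintro ⟨x, y⟩ hz
    simp only [Finset.mem_filter, Finset.mem_product, Finset.mem_range] at hz
    obtain ⟨⟨h1, h2⟩, h3, h4⟩ := hz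
    dsimp only
    rw [Prod.mk.injEq]
    omega
  · rintro ⟨q, y⟩ hz
    simp only [Finset.mem_filter, Finset.mem_product, Finset.mem_range] at hz
    obtain ⟨⟨h1, h2⟩, h3⟩ := hz
    dsimp only
    rw [Prod.mk.injEq]
    omega

theorem stmt13 (a b c : ℕ) (ha : 1 < a) (hab : a < b) (hbc : b < c)
    (hab' : Nat.Coprime a b) (hac' : Nat.Coprime a c) (hbc' : Nat.Coprime b c)
    (p : ℕ) :
    ∃ N : ℕ,
      (∃ I : Finset ℕ, CompIndep a b c p I ∧ I.card = N) ∧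
      (∀ J : Finset ℕ, CompIndep a b c p J → J.card ≤ N) ∧
      (∀ i : ℕ, p = 2 * i → N = (i + 1) ^ 2) ∧
      (∀ i : ℕ, 1 ≤ i → p = 2 * i - 1 → N = i * (i + 1)) := by
  have hb1 : 1 < b := lt_trans ha hab
  have hc1 : 1 < c := lt_trans hb1 hbc
  have coords : ∀ {k1 x1 y1 k2 x2 y2 : ℕ},
      a ^ k1 * b ^ x1 * c ^ y1 = a ^ k2 * b ^ x2 * c ^ y2 → x1 = x2 ∧ y1 = y2 :=
    fun h => coords_eq ha hb1 hc1 hab' hac' hbc' h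
  refine ⟨(p/2+1) * ((p+1)/2+1), ?_, ?_, ?_, ?_⟩
  · -- existence of a maximum independent set
    refine ⟨((Finset.range (p+1) ×ˢ Finset.range (p+1)).filter
        (fun z : ℕ × ℕ => z.1 + z.2 ≤ p ∧ (z.1 + z.2) % 2 = p % 2)).image
        (fun z : ℕ × ℕ => a ^ (p - z.1 - z.2) * b ^ z.1 * c ^ z.2), ⟨?_, ?_⟩, ?_⟩
    · intro m hm
      simp only [Finset.coe_image, Set.mem_image, Finset.mem_coe] at hm
      obtain ⟨⟨x, y⟩, hz, rfl⟩ := hm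
      simp only [Finset.mem_filter, Finset.mem_product, Finset.mem_range] at hz
      exact ⟨x, y, hz.2.1, rfl⟩
    · intro u hu v hv hadj
      obtain ⟨⟨x1, y1⟩, hz1, rfl⟩ := Finset.mem_image.mp hu
      obtain ⟨⟨x2, y2⟩, hz2, rfl⟩ := Finset.mem_image.mp hv
      simp only [Finset.mem_filter, Finset.mem_product, Finset.mem_range] at hz1 hz2
      obtain ⟨⟨hx1, hy1⟩, hs1, hp1⟩ := hz1
      obtain ⟨⟨hx2, hy2⟩, hs2, hp2⟩ := hz2
      obtain ⟨hne, hor⟩ := hadj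
      dsimp only at hne hor ⊢
      rcases hor with h | h | h | h
      · have h' : a ^ (p - x1 - y1) * b ^ (x1 + 1) * c ^ y1
            = a ^ ((p - x2 - y2) + 1) * b ^ x2 * c ^ y2 := by
          calc a ^ (p - x1 - y1) * b ^ (x1 + 1) * c ^ y1
              = b * (a ^ (p - x1 - y1) * b ^ x1 * c ^ y1) := by ring
            _ = a * (a ^ (p - x2 - y2) * b ^ x2 * c ^ y2) := h
            _ = a ^ ((p - x2 - y2) + 1) * b ^ x2 * c ^ y2 := by ring
        obtain ⟨ex, ey⟩ := coords h'
        omega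
      · have h' : a ^ (p - x1 - y1) * b ^ x1 * c ^ (y1 + 1)
            = a ^ ((p - x2 - y2) + 1) * b ^ x2 * c ^ y2 := by
          calc a ^ (p - x1 - y1) * b ^ x1 * c ^ (y1 + 1)
              = c * (a ^ (p - x1 - y1) * b ^ x1 * c ^ y1) := by ring
            _ = a * (a ^ (p - x2 - y2) * b ^ x2 * c ^ y2) := h
            _ = a ^ ((p - x2 - y2) + 1) * b ^ x2 * c ^ y2 := by ring
        obtain ⟨ex, ey⟩ := coords h'
        omega
      · have h' : a ^ (p - x2 - y2) * b ^ (x2 + 1) * c ^ y2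
            = a ^ ((p - x1 - y1) + 1) * b ^ x1 * c ^ y1 := by
          calc a ^ (p - x2 - y2) * b ^ (x2 + 1) * c ^ y2
              = b * (a ^ (p - x2 - y2) * b ^ x2 * c ^ y2) := by ring
            _ = a * (a ^ (p - x1 - y1) * b ^ x1 * c ^ y1) := h
            _ = a ^ ((p - x1 - y1) + 1) * b ^ x1 * c ^ y1 := by ring
        obtain ⟨ex, ey⟩ := coords h'
        omega
      · have h' : a ^ (p - x2 - y2) * b ^ x2 * c ^ (y2 + 1)
            = a ^ ((p - x1 - y1) + 1) * b ^ x1 * c ^ y1 := by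
          calc a ^ (p - x2 - y2) * b ^ x2 * c ^ (y2 + 1)
              = c * (a ^ (p - x2 - y2) * b ^ x2 * c ^ y2) := by ring
            _ = a * (a ^ (p - x1 - y1) * b ^ x1 * c ^ y1) := h
            _ = a ^ ((p - x1 - y1) + 1) * b ^ x1 * c ^ y1 := by ring
        obtain ⟨ex, ey⟩ := coords h'
        omega
    · rw [Finset.card_image_of_injOn, card_parity]
      rintro ⟨x1, y1⟩ h1 ⟨x2, y2⟩ h2 heq
      dsimp only at heq
      obtain ⟨ex, ey⟩ := coords heq
      simp [Prod.ext_iff, ex, ey]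
  · -- upper bound
    rintro J ⟨hsub, hind⟩
    rw [← card_blocks p]
    apply Finset.card_le_card_of_injOn
      (f := fun m : ℕ => ((m.factorization b.minFac / b.factorization b.minFac) / 2,
        m.factorization c.minFac / c.factorization c.minFac))
    · intro m hm
      obtain ⟨x, y, hxy, rfl⟩ := hsub hm
      obtain ⟨e1, e2⟩ := coords_val ha hb1 hc1 hab' hac' hbc' (p - x - y) x y
      simp only [Finset.mem_coe, e1, e2, Finset.mem_filter, Finset.mem_product, Finset.mem_range]
      omega
    · intro m1 hm1 m2 hm2 heq
      obtain ⟨x1, y1, hxy1, hm1e⟩ := hsub hm1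
      obtain ⟨x2, y2, hxy2, hm2e⟩ := hsub hm2
      obtain ⟨e1b, e1c⟩ := coords_val ha hb1 hc1 hab' hac' hbc' (p - x1 - y1) x1 y1
      obtain ⟨e2b, e2c⟩ := coords_val ha hb1 hc1 hab' hac' hbc' (p - x2 - y2) x2 y2
      rw [hm1e, hm2e] at heq
      rw [Prod.ext_iff] at heq
      dsimp only at heq
      rw [e1b, e1c, e2b, e2c] at heq
      obtain ⟨hx, hy⟩ := heq
      by_cases hmm : m1 = m2
      · exact hmm
      exfalso
      subst hy
      rcases (by omega : x1 = x2 ∨ x2 = x1 + 1 ∨ x1 = x2 + 1) with h | h | h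
      · exact hmm (by rw [hm1e, hm2e, h])
      · refine hind m1 (by simpa using hm1) m2 (by simpa using hm2) ⟨hmm, Or.inl ?_⟩
        rw [hm1e, hm2e, h, show p - x1 - y1 = (p - (x1 + 1) - y1) + 1 by omega]
        ring
      · refine hind m1 (by simpa using hm1) m2 (by simpa using hm2)
          ⟨hmm, Or.inr (Or.inr (Or.inl ?_))⟩
        rw [hm1e, hm2e, h, show p - x2 - y1 = (p - (x2 + 1) - y1) + 1 by omega]
        ring
  · rintro i rfl
    have h1 : 2 * i / 2 + 1 = i + 1 := by omega
    have h2 : (2 * i + 1) / 2 + 1 = i + 1 := by omega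
    rw [h1, h2]; ring
  · rintro i hi rfl
    have h1 : (2 * i - 1) / 2 + 1 = i := by omega
    have h2 : (2 * i - 1 + 1) / 2 + 1 = i + 1 := by omega
    rw [h1, h2]
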